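/- Let 𝒜 be a nonempty finite alphabet and let ω be a Toeplitz sequence over 𝒜. Then the subshift σ|_{Z(ω,σ)} is minimal: for every x ∈ Z(ω,σ), the closure of the orbit {σ^n x : n ≥ 0} equals Z(ω,σ). -/
import Mathlib


/-- The one-sided shift on sequences.  Sequences are 0-indexed here: index `n`
stands for position `n+1` of the paper's sequences `{1,2,3,…} → 𝒜`. -/
def shift {𝒜 : Type*} (x : ℕ → 𝒜) : ℕ → 𝒜 := fun n => x (n + 1)

/-- `Z(ω,σ)`: the closure of the forward shift-orbit of `ω`. -/
def orbitClosure {𝒜 : Type*} [TopologicalSpace 𝒜] (ω : ℕ → 𝒜) : Set (ℕ → 𝒜) :=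
  closure {y | ∃ n : ℕ, shift^[n] ω = y}

/-- A sequence is Toeplitz if every position is periodically repeated. -/
def IsToeplitz {𝒜 : Type*} (x : ℕ → 𝒜) : Prop :=
  ∀ n : ℕ, ∃ p : ℕ, 0 < p ∧ ∀ k : ℕ, 0 < k → x (n + k * p) = x n

lemma shift_iterate_apply {𝒜 : Type*} (x : ℕ → 𝒜) (n m : ℕ) :
    (shift^[n] x) m = x (m + n) := by
  induction n generalizing x m with
  | zero => rfl
  | succ n ih =>
    rw [Function.iterate_succ_apply, ih, shift]
    ring_nf

lemma shift_iterate_eq {𝒜 : Type*} (n : ℕ) :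
    (shift^[n] : (ℕ → 𝒜) → (ℕ → 𝒜)) = fun x m => x (m + n) :=
  funext fun x => funext fun m => shift_iterate_apply x n m

lemma continuous_shift_iterate {𝒜 : Type*} [TopologicalSpace 𝒜] (n : ℕ) :
    Continuous (shift^[n] : (ℕ → 𝒜) → (ℕ → 𝒜)) := by
  rw [shift_iterate_eq]
  exact continuous_pi fun m => continuous_apply (m + n)

/-- Closure membership in a product of discrete spaces: agreement on arbitrarily
long prefixes. -/
lemma mem_closure_iff_prefix {𝒜 : Type*} [TopologicalSpace 𝒜] [DiscreteTopology 𝒜]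
    (S : Set (ℕ → 𝒜)) (x : ℕ → 𝒜) :
    x ∈ closure S ↔ ∀ N : ℕ, ∃ y ∈ S, ∀ m < N, y m = x m := by
  constructor
  · intro hx N
    have hU : IsOpen {y : ℕ → 𝒜 | ∀ m < N, y m = x m} := by
      have : {y : ℕ → 𝒜 | ∀ m < N, y m = x m}
          = ⋂ m ∈ Finset.range N, (fun y : ℕ → 𝒜 => y m) ⁻¹' {x m} := by
        ext y; simp [Set.mem_iInter]
      rw [this]
      exact isOpen_biInter_finset fun m _ =>
        (continuous_apply m).isOpen_preimage _ (isOpen_discrete _)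
    have hxU : x ∈ {y : ℕ → 𝒜 | ∀ m < N, y m = x m} := fun m _ => rfl
    rcases mem_closure_iff.mp hx _ hU hxU with ⟨y, hy1, hy2⟩
    exact ⟨y, hy2, hy1⟩
  · intro h
    rw [mem_closure_iff_nhds]
    intro U hU
    rw [nhds_pi, Filter.mem_pi] at hU
    rcases hU with ⟨I, hIfin, t, ht, hsub⟩
    rcases hIfin.bddAbove with ⟨N, hN⟩
    rcases h (N + 1) with ⟨y, hyS, hy⟩
    refine ⟨y, hsub fun i hi => ?_, hyS⟩
    have : y i = x i := hy i (Nat.lt_succ_of_le (hN hi))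
    rw [this]
    have := ht i
    rwa [nhds_discrete, Filter.mem_pure] at this

lemma orbitClosure_shift_mem {𝒜 : Type*} [TopologicalSpace 𝒜]
    (ω y : ℕ → 𝒜) (hy : y ∈ orbitClosure ω) (n : ℕ) :
    shift^[n] y ∈ orbitClosure ω := by
  have hsub : shift^[n] '' {y | ∃ k : ℕ, shift^[k] ω = y} ⊆ {y | ∃ k : ℕ, shift^[k] ω = y} := by
    rintro _ ⟨z, ⟨k, rfl⟩, rfl⟩
    exact ⟨n + k, by rw [Function.iterate_add_apply]⟩
  have : shift^[n] y ∈ closure (shift^[n] '' {y | ∃ k : ℕ, shift^[k] ω = y}) :=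
    (image_closure_subset_closure_image (continuous_shift_iterate n)) ⟨y, hy, rfl⟩
  exact closure_mono hsub this

/-- For a Toeplitz sequence `ω`, the subshift `σ|_{Z(ω,σ)}` is minimal: the orbit
closure of every point of `Z(ω,σ)` is all of `Z(ω,σ)`. -/
theorem stmt10 {𝒜 : Type*} [Fintype 𝒜] [Nonempty 𝒜] [TopologicalSpace 𝒜] [DiscreteTopology 𝒜]
    (ω : ℕ → 𝒜) (hT : IsToeplitz ω) :
    ∀ x ∈ orbitClosure ω, orbitClosure x = orbitClosure ω := by
  intro x hx
  apply Set.Subset.antisymm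
  · -- orbitClosure x ⊆ orbitClosure ω
    apply closure_minimal _ isClosed_closure
    rintro _ ⟨n, rfl⟩
    exact orbitClosure_shift_mem ω x hx n
  · -- orbitClosure ω ⊆ orbitClosure x : it suffices that ω ∈ orbitClosure x
    have hω : ω ∈ orbitClosure x := by
      choose p hp hper using hT
      rw [orbitClosure, mem_closure_iff_prefix]
      intro N
      -- common period P for positions < N
      set P : ℕ := ∏ n ∈ Finset.range N, p n with hP
      have hPpos : 0 < P := Finset.prod_pos fun n _ => hp n
      have hperiod : ∀ n < N, ∀ k : ℕ, ω (n + k * P) = ω n := by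
        intro n hn k
        rcases Nat.eq_zero_or_pos k with rfl | hk
        · simp
        · have hdvd : p n ∣ P := Finset.dvd_prod_of_mem p (Finset.mem_range.mpr hn)
          rcases hdvd with ⟨c, hc⟩
          have hcpos : 0 < c := by
            rcases Nat.eq_zero_or_pos c with rfl | h
            · simp [hc] at hPpos
            · exact h
          have : k * P = (k * c) * p n := by rw [hc]; ring
          rw [this]
          exact hper n (k * c) (Nat.mul_pos hk hcpos)
      -- x agrees with a shift of ω on a long prefix
      have hx' := (mem_closure_iff_prefix _ x).mp hx (N + P)
      rcases hx' with ⟨y, ⟨j, rfl⟩, hyx⟩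
      -- choose multiple of P in [j, j+P]
      set k : ℕ := j / P + 1 with hk
      have hkP_ge : j ≤ k * P := by
        have : j < (j / P) * P + P := Nat.lt_div_mul_add hPpos
        have hkeq : k * P = (j / P) * P + P := by rw [hk]; ring
        omega
      have hkP_le : k * P ≤ j + P := by
        have h1 : (j / P) * P ≤ j := Nat.div_mul_le_self j P
        have hkeq : k * P = (j / P) * P + P := by rw [hk]; ring
        omega
      refine ⟨shift^[k * P - j] x, ⟨k * P - j, rfl⟩, ?_⟩
      intro m hm
      have hlt : m + (k * P - j) < N + P := by omega
      have h1 := hyx _ hlt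
      rw [shift_iterate_apply] at h1
      rw [shift_iterate_apply]
      have h2 : m + (k * P - j) + j = m + k * P := by omega
      rw [h2] at h1
      rw [← h1]
      exact hperiod m hm k
    apply closure_minimal _ isClosed_closure
    rintro _ ⟨n, rfl⟩
    exact orbitClosure_shift_mem x ω hω n
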